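/- Fix a finite sequence of items (u_i,ν_i)_{1≤i≤n} with pairwise distinct labels in (0,1). For x ∈ (0,1], let R_{<x} be the number of heaps produced by the heap patience sorting algorithm applied to the subsequence, taken in the original order, of the items whose label is smaller than x. Then x ↦ R_{<x} is non-decreasing: for x ≤ y one has R_{<x} ≤ R_{<y}; in particular, restricting to the items with labels below a threshold never requires more heaps than the full sequence. -/

import Mathlib

open MeasureTheory ProbabilityTheory Filter Topology
open scoped ENNReal NNReal

namespace HeapPatience

/-- Decrement by one the number of lives of the (first) alive particle with label `x`. -/
noncomputable def decrementAt : List (ℝ × ℕ) → ℝ → List (ℝ × ℕ)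
  | [], _ => []
  | p :: rest, x =>
      if p.1 = x ∧ 0 < p.2 then (p.1, p.2 - 1) :: rest else p :: decrementAt rest x

/-- One step of the heap patience sorting algorithm, where `acc = (state, number of roots)`:
the new item is attached as a child of the alive particle (a particle with at least one
remaining life) having the largest label smaller than the label of the item, and that
particle loses one life; if there is no such particle, a new root (tree) is created. -/
noncomputable def step (acc : List (ℝ × ℕ) × ℕ) (item : ℝ × ℕ) : List (ℝ × ℕ) × ℕ :=
  match (acc.1.filter fun p => decide (0 < p.2 ∧ p.1 < item.1)).argmax Prod.fst with
  | none => (item :: acc.1, acc.2 + 1)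
  | some q => (item :: decrementAt acc.1 q.1, acc.2)

/-- Run the heap patience sorting algorithm on the items `(label, lives)` in order; returns
the final state (the particles with their remaining lives) and the number of roots created. -/
noncomputable def run (items : List (ℝ × ℕ)) : List (ℝ × ℕ) × ℕ :=
  items.foldl step ([], 0)

/-- `R items` : the number of heaps (trees) produced by the heap patience sorting
algorithm applied to the finite sequence `items` of pairs `(label, number of lives)`. -/
noncomputable def R (items : List (ℝ × ℕ)) : ℕ := (run items).2

/-- `D items` : after running the algorithm, the number of dead particles whose label is
smaller than the label of every alive particle, i.e. the number of leading zeros of the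
label-ordered vector of remaining lives. -/
noncomputable def D (items : List (ℝ × ℕ)) : ℕ :=
  ((run items).1.filter fun p =>
      decide (p.2 = 0 ∧ ∀ q ∈ (run items).1, 0 < q.2 → p.1 < q.1)).length

/-- `Rn U ν n ω` : the random number of heaps `𝐑(n)` needed to sort the first `n`
random items `(U i ω, ν i ω)`. -/
noncomputable def Rn {Ω : Type} (U : ℕ → Ω → ℝ) (ν : ℕ → Ω → ℕ) (n : ℕ) (ω : Ω) : ℕ :=
  R ((List.range n).map fun i => (U i ω, ν i ω))

/-- `Dn U ν n ω` : the random variable `D_n`, the number of dead items whose label is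
smaller than the label of every alive item after sorting the first `n` random items. -/
noncomputable def Dn {Ω : Type} (U : ℕ → Ω → ℝ) (ν : ℕ → Ω → ℕ) (n : ℕ) (ω : Ω) : ℕ :=
  D ((List.range n).map fun i => (U i ω, ν i ω))

/-- The uniform probability measure on the interval `(0,1)`. -/
noncomputable def unif01 : Measure ℝ := volume.restrict (Set.Ioo 0 1)


/-- domination relation between particles -/
def Rel (q p : ℝ × ℕ) : Prop := q.1 = p.1 ∧ q.2 ≤ p.2

lemma decrementAt_map_fst (L : List (ℝ × ℕ)) (a : ℝ) :
    (decrementAt L a).map Prod.fst = L.map Prod.fst := by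
  induction L with
  | nil => simp [decrementAt]
  | cons p rest ih =>
    by_cases h : p.1 = a ∧ 0 < p.2
    · simp [decrementAt, h]
    · simp [decrementAt, h, ih]

lemma decrementAt_eq_self {L : List (ℝ × ℕ)} {a : ℝ}
    (h : ∀ p ∈ L, p.1 = a → p.2 = 0) : decrementAt L a = L := by
  induction L with
  | nil => simp [decrementAt]
  | cons p rest ih =>
    have hc : ¬ (p.1 = a ∧ 0 < p.2) := by
      rintro ⟨h1, h2⟩
      exact absurd (h p List.mem_cons_self h1) h2.ne'
    simp [decrementAt, hc, ih fun q hq => h q (List.mem_cons_of_mem _ hq)]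

lemma filter_decrementAt_lt {x a : ℝ} (hax : a < x) (T : List (ℝ × ℕ)) :
    (decrementAt T a).filter (fun p => decide (p.1 < x)) =
      decrementAt (T.filter fun p => decide (p.1 < x)) a := by
  induction T with
  | nil => simp [decrementAt]
  | cons p rest ih =>
    by_cases h : p.1 = a ∧ 0 < p.2
    · have hpx : p.1 < x := h.1 ▸ hax
      simp [decrementAt, h, List.filter_cons, hpx, hax]
    · by_cases hpx : p.1 < x
      · simp [decrementAt, h, List.filter_cons, hpx, ih]
      · simp [decrementAt, h, List.filter_cons, hpx, ih]

lemma filter_decrementAt_of_not {x a : ℝ} (hax : ¬ a < x) (T : List (ℝ × ℕ)) :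
    (decrementAt T a).filter (fun p => decide (p.1 < x)) =
      T.filter fun p => decide (p.1 < x) := by
  induction T with
  | nil => simp [decrementAt]
  | cons p rest ih =>
    by_cases h : p.1 = a ∧ 0 < p.2
    · have hpx : ¬ p.1 < x := h.1 ▸ hax
      simp [decrementAt, h, List.filter_cons, hpx, hax]
    · by_cases hpx : p.1 < x
      · simp [decrementAt, h, List.filter_cons, hpx, ih]
      · simp [decrementAt, h, List.filter_cons, hpx, ih]

lemma cand_filter {x u : ℝ} (hux : u ≤ x) (T : List (ℝ × ℕ)) :
    T.filter (fun p => decide (0 < p.2 ∧ p.1 < u)) =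
      (T.filter fun p => decide (p.1 < x)).filter (fun p => decide (0 < p.2 ∧ p.1 < u)) := by
  rw [List.filter_filter]
  refine List.filter_congr ?_
  intro p _
  by_cases h2 : p.1 < x
  · by_cases h1 : 0 < p.2 ∧ p.1 < u <;> simp [h1, h2]
  · have h1 : ¬ (0 < p.2 ∧ p.1 < u) := by
      rintro ⟨_, hu⟩; exact h2 (lt_of_lt_of_le hu hux)
    simp [h1, h2]

lemma forall₂_map_fst {T' S : List (ℝ × ℕ)} (h : List.Forall₂ Rel T' S) :
    T'.map Prod.fst = S.map Prod.fst := by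
  induction h with
  | nil => rfl
  | cons hqp _ ih => simp [hqp.1, ih]

lemma forall₂_exists {T' S : List (ℝ × ℕ)} (h : List.Forall₂ Rel T' S)
    {q : ℝ × ℕ} (hq : q ∈ T') : ∃ p ∈ S, Rel q p := by
  induction h with
  | nil => simp at hq
  | cons hqp htail ih =>
    rcases List.mem_cons.mp hq with h | h
    · exact ⟨_, List.mem_cons_self, h ▸ hqp⟩
    · obtain ⟨p, hp, hrel⟩ := ih h
      exact ⟨p, List.mem_cons_of_mem _ hp, hrel⟩

lemma forall₂_dec_left {T' S : List (ℝ × ℕ)} {a : ℝ}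
    (h : List.Forall₂ Rel T' S) : List.Forall₂ Rel (decrementAt T' a) S := by
  induction h with
  | nil => simp [decrementAt]
  | @cons q p T'' S'' hqp htail ih =>
    by_cases hc : q.1 = a ∧ 0 < q.2
    · rw [decrementAt, if_pos hc]
      exact List.Forall₂.cons ⟨hqp.1, le_trans (Nat.sub_le _ _) hqp.2⟩ htail
    · rw [decrementAt, if_neg hc]
      exact List.Forall₂.cons hqp ih

lemma forall₂_dec_both {T' S : List (ℝ × ℕ)} {a : ℝ}
    (hnd : (T'.map Prod.fst).Nodup) (h : List.Forall₂ Rel T' S) :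
    List.Forall₂ Rel (decrementAt T' a) (decrementAt S a) := by
  induction h with
  | nil => simp [decrementAt]
  | @cons q p T'' S'' hqp htail ih =>
    simp only [List.map_cons, List.nodup_cons] at hnd
    by_cases hqa : q.1 = a
    · by_cases hq2 : 0 < q.2
      · have hp2 : 0 < p.2 := lt_of_lt_of_le hq2 hqp.2
        rw [decrementAt, if_pos ⟨hqa, hq2⟩, decrementAt, if_pos ⟨hqp.1 ▸ hqa, hp2⟩]
        exact List.Forall₂.cons ⟨hqp.1, Nat.sub_le_sub_right hqp.2 1⟩ htail
      · have hT : decrementAt T'' a = T'' := by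
          apply decrementAt_eq_self
          intro e he hea
          exact absurd (hea ▸ List.mem_map_of_mem (f := Prod.fst) he) (hqa ▸ hnd.1)
        rw [decrementAt, if_neg (by rintro ⟨_, h2⟩; exact hq2 h2), hT]
        by_cases hp2 : 0 < p.2
        · rw [decrementAt, if_pos ⟨hqp.1 ▸ hqa, hp2⟩]
          exact List.Forall₂.cons ⟨hqp.1, Nat.le_sub_one_of_lt (Nat.lt_of_le_of_lt (Nat.le_of_not_lt hq2) hp2) |>.trans (le_refl _)⟩ htail
        · have hS : decrementAt S'' a = S'' := by
            apply decrementAt_eq_self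
            intro e he hea
            have : e.1 ∈ T''.map Prod.fst := forall₂_map_fst htail ▸ List.mem_map_of_mem (f := Prod.fst) he
            exact absurd (hea ▸ this) (hqa ▸ hnd.1)
          rw [decrementAt, if_neg (by rintro ⟨_, h2⟩; exact hp2 h2), hS]
          exact List.Forall₂.cons hqp htail
    · rw [decrementAt, if_neg (by rintro ⟨h1, _⟩; exact hqa h1),
        decrementAt, if_neg (by rintro ⟨h1, _⟩; exact hqa (hqp.1 ▸ h1))]
      exact List.Forall₂.cons hqp (ih hnd.2)


lemma step_none {S : List (ℝ × ℕ)} {rS : ℕ} {item : ℝ × ℕ}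
    (h : (S.filter fun p => decide (0 < p.2 ∧ p.1 < item.1)).argmax Prod.fst = none) :
    step (S, rS) item = (item :: S, rS + 1) := by
  have h' : (S.filter fun p => decide (0 < p.2) && decide (p.1 < item.1)).argmax Prod.fst
      = none := by simpa using h
  simp [step, h']

lemma step_some {S : List (ℝ × ℕ)} {rS : ℕ} {item q : ℝ × ℕ}
    (h : (S.filter fun p => decide (0 < p.2 ∧ p.1 < item.1)).argmax Prod.fst = some q) :
    step (S, rS) item = (item :: decrementAt S q.1, rS) := by
  have h' : (S.filter fun p => decide (0 < p.2) && decide (p.1 < item.1)).argmax Prod.fst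
      = some q := by simpa using h
  simp [step, h']

lemma main_aux (x y : ℝ) (hxy : x ≤ y) :
    ∀ (items S T : List (ℝ × ℕ)) (rS rT : ℕ),
      ((items.map Prod.fst) ++ T.map Prod.fst).Nodup →
      List.Forall₂ Rel (T.filter fun p => decide (p.1 < x)) S →
      rS ≤ rT →
      ((items.filter fun p => decide (p.1 < x)).foldl step (S, rS)).2 ≤
        ((items.filter fun p => decide (p.1 < y)).foldl step (T, rT)).2 := by
  intro items
  induction items with
  | nil => intro S T rS rT _ _ h; simpa using h
  | cons item rest ih =>
    intro S T rS rT hnd hdom hr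
    have hnd' : (item.1 :: (rest.map Prod.fst ++ T.map Prod.fst)).Nodup := by
      simpa using hnd
    have hndrest : (rest.map Prod.fst ++ T.map Prod.fst).Nodup :=
      (List.nodup_cons.mp hnd').2
    have hndcons : (rest.map Prod.fst ++ (item.1 :: T.map Prod.fst)).Nodup :=
      (List.perm_middle.nodup_iff).mpr hnd'
    have hndT : (T.map Prod.fst).Nodup := (List.nodup_append'.mp hndrest).2.1
    have hT'nd : ((T.filter fun p => decide (p.1 < x)).map Prod.fst).Nodup :=
      ((List.filter_sublist : (T.filter fun p => decide (p.1 < x)).Sublist T).map Prod.fst).nodup hndT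
    by_cases hx1 : item.1 < x
    · -- both runs process the item
      have hy1 : item.1 < y := lt_of_lt_of_le hx1 hxy
      have hfcx : ∀ L : List (ℝ × ℕ), ((item :: L).filter fun p => decide (p.1 < x))
          = item :: (L.filter fun p => decide (p.1 < x)) := by
        intro L; simp [List.filter_cons, hx1]
      rw [show ((item :: rest).filter fun p => decide (p.1 < x))
            = item :: (rest.filter fun p => decide (p.1 < x)) by
          simp [List.filter_cons, hx1],
        show ((item :: rest).filter fun p => decide (p.1 < y))
            = item :: (rest.filter fun p => decide (p.1 < y)) by
          simp [List.filter_cons, hy1],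
        List.foldl_cons, List.foldl_cons]
      have hcand : (T.filter fun p => decide (0 < p.2 ∧ p.1 < item.1)) =
          ((T.filter fun p => decide (p.1 < x)).filter fun p => decide (0 < p.2 ∧ p.1 < item.1)) :=
        cand_filter (le_of_lt hx1) T
      rcases hSm : (S.filter fun p => decide (0 < p.2 ∧ p.1 < item.1)).argmax Prod.fst with _ | q
      · -- no candidate in S; then no candidate in T either
        have hcS : (S.filter fun p => decide (0 < p.2 ∧ p.1 < item.1)) = [] :=
          List.argmax_eq_none.mp hSm
        have hcT : (T.filter fun p => decide (0 < p.2 ∧ p.1 < item.1)) = [] := by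
          rw [hcand, List.filter_eq_nil_iff]
          intro e he hed
          obtain ⟨p, hp, hrel⟩ := forall₂_exists hdom he
          have hed' : 0 < e.2 ∧ e.1 < item.1 := of_decide_eq_true hed
          have hpmem : p ∈ (S.filter fun p => decide (0 < p.2 ∧ p.1 < item.1)) :=
            List.mem_filter.mpr ⟨hp, decide_eq_true
              ⟨lt_of_lt_of_le hed'.1 hrel.2, hrel.1 ▸ hed'.2⟩⟩
          rw [hcS] at hpmem
          exact absurd hpmem List.not_mem_nil
        rw [step_none hSm, step_none (List.argmax_eq_none.mpr hcT)]
        refine ih (item :: S) (item :: T) (rS + 1) (rT + 1) ?_ ?_ (Nat.succ_le_succ hr)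
        · simpa using hndcons
        · rw [hfcx]
          exact List.Forall₂.cons ⟨rfl, le_refl _⟩ hdom
      · -- S has a candidate q
        have hqmem := List.argmax_mem hSm
        have hq := of_decide_eq_true (List.mem_filter.mp hqmem).2
        rcases hTm : (T.filter fun p => decide (0 < p.2 ∧ p.1 < item.1)).argmax Prod.fst with _ | q'
        · -- T has no candidate: new root on T side
          have hcT : (T.filter fun p => decide (0 < p.2 ∧ p.1 < item.1)) = [] :=
            List.argmax_eq_none.mp hTm
          have hdead : ∀ e ∈ (T.filter fun p => decide (p.1 < x)), e.1 = q.1 → e.2 = 0 := by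
            intro e he heq
            by_contra hne
            have he2 : 0 < e.2 := Nat.pos_of_ne_zero hne
            have : e ∈ (T.filter fun p => decide (0 < p.2 ∧ p.1 < item.1)) :=
              List.mem_filter.mpr ⟨List.mem_of_mem_filter he,
                decide_eq_true ⟨he2, heq ▸ hq.2⟩⟩
            rw [hcT] at this
            exact absurd this List.not_mem_nil
          have hdom' : List.Forall₂ Rel (T.filter fun p => decide (p.1 < x))
              (decrementAt S q.1) :=
            (decrementAt_eq_self hdead) ▸ forall₂_dec_both hT'nd hdom
          rw [step_some hSm, step_none hTm]
          refine ih (item :: decrementAt S q.1) (item :: T) rS (rT + 1) ?_ ?_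
            (hr.trans (Nat.le_succ _))
          · simpa using hndcons
          · rw [hfcx]
            exact List.Forall₂.cons ⟨rfl, le_refl _⟩ hdom'
        · -- both have candidates
          have hq'mem := List.argmax_mem hTm
          have hq' := of_decide_eq_true (List.mem_filter.mp hq'mem).2
          have hq'T : q' ∈ T := List.mem_of_mem_filter hq'mem
          have hq'T' : q' ∈ (T.filter fun p => decide (p.1 < x)) :=
            List.mem_filter.mpr ⟨hq'T, decide_eq_true (lt_trans hq'.2 hx1)⟩
          have hq'le : q'.1 ≤ q.1 := by
            obtain ⟨p, hp, hrel⟩ := forall₂_exists hdom hq'T'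
            have hpmem : p ∈ (S.filter fun p => decide (0 < p.2 ∧ p.1 < item.1)) :=
              List.mem_filter.mpr ⟨hp, decide_eq_true
                ⟨lt_of_lt_of_le hq'.1 hrel.2, hrel.1 ▸ hq'.2⟩⟩
            have := List.le_of_mem_argmax hpmem hSm
            simpa [← hrel.1] using this
          have key : List.Forall₂ Rel (decrementAt (T.filter fun p => decide (p.1 < x)) q'.1)
              (decrementAt S q.1) := by
            by_cases heq : q'.1 = q.1
            · exact heq ▸ forall₂_dec_both hT'nd hdom
            · have hlt : q'.1 < q.1 := lt_of_le_of_ne hq'le heq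
              have hdead : ∀ e ∈ (T.filter fun p => decide (p.1 < x)), e.1 = q.1 → e.2 = 0 := by
                intro e he heqe
                by_contra hne
                have he2 : 0 < e.2 := Nat.pos_of_ne_zero hne
                have hemem : e ∈ (T.filter fun p => decide (0 < p.2 ∧ p.1 < item.1)) :=
                  List.mem_filter.mpr ⟨List.mem_of_mem_filter he,
                    decide_eq_true ⟨he2, heqe ▸ hq.2⟩⟩
                have := List.le_of_mem_argmax hemem hTm
                rw [heqe] at this
                exact absurd this (not_le.mpr hlt)
              exact forall₂_dec_left
                ((decrementAt_eq_self hdead) ▸ forall₂_dec_both hT'nd hdom)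
          rw [step_some hSm, step_some hTm]
          refine ih (item :: decrementAt S q.1) (item :: decrementAt T q'.1) rS rT ?_ ?_ hr
          · simpa [decrementAt_map_fst] using hndcons
          · rw [hfcx, filter_decrementAt_lt (lt_trans hq'.2 hx1)]
            exact List.Forall₂.cons ⟨rfl, le_refl _⟩ key
    · by_cases hy1 : item.1 < y
      · -- only the T run processes the item
        have hfnx : ∀ L : List (ℝ × ℕ), ((item :: L).filter fun p => decide (p.1 < x))
            = L.filter fun p => decide (p.1 < x) := by
          intro L; simp [List.filter_cons, hx1]
        rw [hfnx, show ((item :: rest).filter fun p => decide (p.1 < y))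
              = item :: (rest.filter fun p => decide (p.1 < y)) by
            simp [List.filter_cons, hy1],
          List.foldl_cons]
        rcases hTm : (T.filter fun p => decide (0 < p.2 ∧ p.1 < item.1)).argmax Prod.fst with _ | q'
        · rw [step_none hTm]
          refine ih S (item :: T) rS (rT + 1) ?_ ?_ (hr.trans (Nat.le_succ _))
          · simpa using hndcons
          · rw [hfnx]
            exact hdom
        · rw [step_some hTm]
          refine ih S (item :: decrementAt T q'.1) rS rT ?_ ?_ hr
          · simpa [decrementAt_map_fst] using hndcons
          · rw [hfnx]
            by_cases hq'x : q'.1 < x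
            · rw [filter_decrementAt_lt hq'x]
              exact forall₂_dec_left hdom
            · rw [filter_decrementAt_of_not hq'x]
              exact hdom
      · -- neither run processes the item
        rw [show ((item :: rest).filter fun p => decide (p.1 < x))
              = rest.filter fun p => decide (p.1 < x) by
            simp [List.filter_cons, hx1],
          show ((item :: rest).filter fun p => decide (p.1 < y))
              = rest.filter fun p => decide (p.1 < y) by
            simp [List.filter_cons, hy1]]
        exact ih S T rS rT hndrest hdom hr


/-- Restricting the items to those with labels below a threshold `x` and raising the
threshold never decreases the number of heaps produced. -/
theorem R_threshold_monotone
    (items : List (ℝ × ℕ))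
    (hlab : ∀ p ∈ items, p.1 ∈ Set.Ioo (0 : ℝ) 1)
    (hlives : ∀ p ∈ items, 1 ≤ p.2)
    (hdist : items.Pairwise fun p q => p.1 ≠ q.1)
    (x y : ℝ) (hx : x ∈ Set.Ioc (0 : ℝ) 1) (hy : y ∈ Set.Ioc (0 : ℝ) 1) (hxy : x ≤ y) :
    R (items.filter fun p => decide (p.1 < x))
      ≤ R (items.filter fun p => decide (p.1 < y)) := by
  have h := main_aux x y hxy items ([] : List (ℝ × ℕ)) ([] : List (ℝ × ℕ)) 0 0
    (by simp only [List.map_nil, List.append_nil]; exact List.pairwise_map.mpr hdist) (by simp) le_rfl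
  simpa [R, run] using h

end HeapPatience
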